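/- arXiv:2505.11744 — 4 statements merged into one kernel-verified Lean document; each statement's English description precedes it below -/
import Mathlib

section
/- Correctness identity for multi-authority attribute-based IPFE decryption (the algebraic core of Theorem 6.1): Let q be a positive modulus, ι a finite index set of authorities, and n, m, m' natural numbers. Suppose given over ℤ_q: matrices A_i ∈ ℤ_q^{n×m}, B_i ∈ ℤ_q^{n×m'}, P_i ∈ ℤ_q^{n×m} for each i ∈ ι, a matrix G ∈ ℤ_q^{n×m}, vectors s_i ∈ ℤ_q^n, e_{1,i} ∈ ℤ_q^m, k_i ∈ ℤ_q^m for each i ∈ ι, and vectors e_2 ∈ ℤ_q^{m'}, e_3 ∈ ℤ_q^m, u, v ∈ ℤ_q^n, r ∈ ℤ_q^{m'}, w ∈ ℤ_q^m. Assume G·w = v and, for every i ∈ ι, A_i·k_i = P_i·w + B_i·r. Define the ciphertext components c_{1,i}ᵀ := s_iᵀA_i + e_{1,i}ᵀ, c_2ᵀ := Σ_{i∈ι} s_iᵀB_i + e_2ᵀ, and c_3ᵀ := Σ_{i∈ι} s_iᵀP_i + e_3ᵀ + uᵀG. Then the decryption value satisfies c_3ᵀw + c_2ᵀr − Σ_{i∈ι}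 c_{1,i}ᵀk_i = uᵀv + (e_3ᵀw + e_2ᵀr − Σ_{i∈ι} e_{1,i}ᵀk_i). -/
open Matrix


private lemma sum_dotProduct' {q : ℕ} {ι : Type*} [Fintype ι] {m : ℕ}
    (f : ι → Fin m → ZMod q) (w : Fin m → ZMod q) :
    (∑ i, f i) ⬝ᵥ w = ∑ i, f i ⬝ᵥ w := by
  simp [dotProduct, Finset.sum_apply, Finset.sum_mul]
  exact Finset.sum_comm

/-- Correctness identity for multi-authority attribute-based IPFE decryption
(the algebraic core of Theorem 6.1). -/
theorem maabipfe_decryption_identity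
    (q : ℕ) (hq : 0 < q)
    {ι : Type*} [Fintype ι] (n m m' : ℕ)
    (A : ι → Matrix (Fin n) (Fin m) (ZMod q))
    (B : ι → Matrix (Fin n) (Fin m') (ZMod q))
    (P : ι → Matrix (Fin n) (Fin m) (ZMod q))
    (G : Matrix (Fin n) (Fin m) (ZMod q))
    (s : ι → Fin n → ZMod q)
    (e1 : ι → Fin m → ZMod q)
    (k : ι → Fin m → ZMod q)
    (e2 : Fin m' → ZMod q) (e3 : Fin m → ZMod q)
    (u v : Fin n → ZMod q) (r : Fin m' → ZMod q) (w : Fin m → ZMod q)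
    (hGw : G.mulVec w = v)
    (hk : ∀ i, (A i).mulVec (k i) = (P i).mulVec w + (B i).mulVec r)
    (c1 : ι → Fin m → ZMod q) (c2 : Fin m' → ZMod q) (c3 : Fin m → ZMod q)
    (hc1 : ∀ i, c1 i = Matrix.vecMul (s i) (A i) + e1 i)
    (hc2 : c2 = (∑ i, Matrix.vecMul (s i) (B i)) + e2)
    (hc3 : c3 = (∑ i, Matrix.vecMul (s i) (P i)) + e3 + Matrix.vecMul u G) :
    c3 ⬝ᵥ w + c2 ⬝ᵥ r - ∑ i, c1 i ⬝ᵥ k i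
      = u ⬝ᵥ v + (e3 ⬝ᵥ w + e2 ⬝ᵥ r - ∑ i, e1 i ⬝ᵥ k i) := by
  subst hc2 hc3 hGw
  simp only [hc1, add_dotProduct, sum_dotProduct', ← Matrix.dotProduct_mulVec, hk,
    dotProduct_add, Finset.sum_add_distrib]
  ring
end

section
/- Decryption noise bound (the quantitative part of Theorem 6.1): Let λ, χ, χ' be nonnegative real numbers, m, m', L natural numbers, and ι a finite index set with |ι| ≤ L. Let e_3, w ∈ ℤ^m, e_2, r ∈ ℤ^{m'}, and e_{1,i}, k_i ∈ ℤ^m for i ∈ ι be integer vectors such that: every entry of w lies in {0,1}; every entry of e_3, of e_2, of each e_{1,i}, and of each k_i has absolute value at most √λ·χ; and every entry of r has absolute value at most √λ·χ'. Then |e_3ᵀw + e_2ᵀr − Σ_{i∈ι} e_{1,i}ᵀk_i| ≤ √λ·χ·m + λ·χ·χ'·m' + λ·χ²·m·L, where all products are interpreted in ℝ. -/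
open Matrix

/-- Decryption noise bound (the quantitative part of Theorem 6.1). -/
theorem maabipfe_noise_bound
    (lam χ χ' : ℝ) (hlam : 0 ≤ lam) (hχ : 0 ≤ χ) (hχ' : 0 ≤ χ')
    (m m' L : ℕ)
    {ι : Type*} [Fintype ι] (hι : Fintype.card ι ≤ L)
    (e3 w : Fin m → ℤ) (e2 r : Fin m' → ℤ)
    (e1 k : ι → Fin m → ℤ)
    (hw : ∀ j, w j = 0 ∨ w j = 1)
    (he3 : ∀ j, |(e3 j : ℝ)| ≤ Real.sqrt lam * χ)
    (he2 : ∀ j, |(e2 j : ℝ)| ≤ Real.sqrt lam * χ)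
    (he1 : ∀ i j, |(e1 i j : ℝ)| ≤ Real.sqrt lam * χ)
    (hk : ∀ i j, |(k i j : ℝ)| ≤ Real.sqrt lam * χ)
    (hr : ∀ j, |(r j : ℝ)| ≤ Real.sqrt lam * χ') :
    |((e3 ⬝ᵥ w + e2 ⬝ᵥ r - ∑ i, e1 i ⬝ᵥ k i : ℤ) : ℝ)|
      ≤ Real.sqrt lam * χ * m + lam * χ * χ' * m' + lam * χ ^ 2 * m * L := by
  have hs : Real.sqrt lam * Real.sqrt lam = lam := Real.mul_self_sqrt hlam
  have h1 : |((e3 ⬝ᵥ w : ℤ) : ℝ)| ≤ Real.sqrt lam * χ * m := by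
    simp only [dotProduct]
    push_cast
    calc |∑ j, (e3 j : ℝ) * (w j : ℝ)| ≤ ∑ j : Fin m, Real.sqrt lam * χ := by
          refine (Finset.abs_sum_le_sum_abs _ _).trans (Finset.sum_le_sum fun j _ => ?_)
          rw [abs_mul]
          rcases hw j with h | h <;> simp [h] <;>
            [skip; exact he3 j]
          positivity
      _ = Real.sqrt lam * χ * m := by simp [mul_comm]
  have h2 : |((e2 ⬝ᵥ r : ℤ) : ℝ)| ≤ lam * χ * χ' * m' := by
    simp only [dotProduct]
    push_cast
    calc |∑ j, (e2 j : ℝ) * (r j : ℝ)| ≤ ∑ j : Fin m', lam * χ * χ' := by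
          refine (Finset.abs_sum_le_sum_abs _ _).trans (Finset.sum_le_sum fun j _ => ?_)
          rw [abs_mul]
          calc |(e2 j : ℝ)| * |(r j : ℝ)| ≤ (Real.sqrt lam * χ) * (Real.sqrt lam * χ') :=
                mul_le_mul (he2 j) (hr j) (abs_nonneg _) (by positivity)
            _ = lam * χ * χ' := by rw [mul_mul_mul_comm, hs]; ring
      _ = lam * χ * χ' * m' := by simp [mul_comm]
  have h3 : |((∑ i, e1 i ⬝ᵥ k i : ℤ) : ℝ)| ≤ lam * χ ^ 2 * m * L := by
    simp only [dotProduct]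
    push_cast
    calc |∑ i, ∑ j, (e1 i j : ℝ) * (k i j : ℝ)| ≤ ∑ i : ι, ∑ j : Fin m, lam * χ ^ 2 := by
          refine (Finset.abs_sum_le_sum_abs _ _).trans (Finset.sum_le_sum fun i _ => ?_)
          refine (Finset.abs_sum_le_sum_abs _ _).trans (Finset.sum_le_sum fun j _ => ?_)
          rw [abs_mul]
          calc |(e1 i j : ℝ)| * |(k i j : ℝ)| ≤ (Real.sqrt lam * χ) * (Real.sqrt lam * χ) :=
                mul_le_mul (he1 i j) (hk i j) (abs_nonneg _) (by positivity)
            _ = lam * χ ^ 2 := by rw [mul_mul_mul_comm, hs]; ring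
      _ = lam * χ ^ 2 * m * Fintype.card ι := by
          simp [Finset.sum_const, Finset.card_univ]; ring
      _ ≤ lam * χ ^ 2 * m * L := by
          have : (Fintype.card ι : ℝ) ≤ L := by exact_mod_cast hι
          have hnn : 0 ≤ lam * χ ^ 2 * m := by positivity
          exact mul_le_mul_of_nonneg_left this hnn
  calc |((e3 ⬝ᵥ w + e2 ⬝ᵥ r - ∑ i, e1 i ⬝ᵥ k i : ℤ) : ℝ)|
      ≤ |((e3 ⬝ᵥ w : ℤ) : ℝ)| + |((e2 ⬝ᵥ r : ℤ) : ℝ)| + |((∑ i, e1 i ⬝ᵥ k i : ℤ) : ℝ)| := by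
        push_cast
        exact (abs_sub _ _).trans (by gcongr; exact abs_add_le _ _)
    _ ≤ _ := by gcongr
end

section
/- Exact recovery under modulus switching (the core of Theorem 8.1, correctness of the noiseless MA-ABIPFE scheme): Let n, p, q, B₀ be natural numbers with 0 < p and n·p² + 2·p·B₀ < q. Let u, v ∈ ℤⁿ be integer vectors with |v_i| ≤ p for every i, and let ẽ ∈ ℤ be an integer with |ẽ| ≤ B₀. Define the encoded vector E ∈ ℤⁿ by E_i := round((q/p)·u_i), where round is rounding of a real number to the nearest integer. Then round((p/q)·(Σ_{i=1}^n E_i·v_i + ẽ)) = Σ_{i=1}^n u_i·v_i, i.e., the modulus-switched decryption recovers the exact integer inner product. -/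
lemma round_int_add_of_abs_lt (m : ℤ) (ε : ℝ) (h : |ε| < 1/2) :
    round ((m : ℝ) + ε) = m := by
  rw [round_eq, show (m : ℝ) + ε + 1/2 = (m : ℝ) + (ε + 1/2) by ring,
    Int.floor_intCast_add]
  have h1 := abs_lt.mp h
  have h0 : ⌊ε + 1/2⌋ = 0 := by
    apply Int.floor_eq_zero_iff.mpr
    constructor
    · linarith [h1.1]
    · linarith [h1.2]
  omega

/-- Exact recovery under modulus switching (the core of Theorem 8.1,
correctness of the noiseless MA-ABIPFE scheme). -/
theorem modulus_switching_exact_recovery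
    (n p q B₀ : ℕ) (hp : 0 < p) (hq : n * p ^ 2 + 2 * p * B₀ < q)
    (u v : Fin n → ℤ) (hv : ∀ i, |v i| ≤ (p : ℤ))
    (e : ℤ) (he : |e| ≤ (B₀ : ℤ)) :
    round (((p : ℝ) / (q : ℝ)) *
        (((∑ i, round (((q : ℝ) / (p : ℝ)) * (u i : ℝ)) * v i) + e : ℤ) : ℝ))
      = ∑ i, u i * v i := by
  have hq0 : 0 < q := lt_of_le_of_lt (Nat.zero_le _) hq
  have hpR : (0:ℝ) < p := by exact_mod_cast hp
  have hqR : (0:ℝ) < q := by exact_mod_cast hq0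
  set d : Fin n → ℝ := fun i =>
    ((round (((q:ℝ)/(p:ℝ)) * (u i : ℝ)) : ℤ) : ℝ) - ((q:ℝ)/(p:ℝ)) * (u i : ℝ) with hd
  have hdb : ∀ i, |d i| ≤ 1/2 := by
    intro i
    rw [hd, abs_sub_comm]
    exact abs_sub_round _
  set ε : ℝ := ((p:ℝ)/(q:ℝ)) * ((∑ i, d i * (v i : ℝ)) + (e : ℝ)) with hε
  have key : ((p:ℝ)/(q:ℝ)) *
      (((∑ i, round (((q:ℝ)/(p:ℝ)) * (u i : ℝ)) * v i) + e : ℤ) : ℝ)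
      = ((∑ i, u i * v i : ℤ) : ℝ) + ε := by
    push_cast
    rw [hε]
    have : ∀ i, ((round (((q:ℝ)/(p:ℝ)) * (u i : ℝ)) : ℤ) : ℝ) * (v i : ℝ)
        = d i * v i + ((q:ℝ)/(p:ℝ)) * (u i * v i) := by
      intro i; rw [hd]; ring
    rw [Finset.sum_congr rfl (fun i _ => this i), Finset.sum_add_distrib,
      ← Finset.mul_sum]
    field_simp
    ring
  rw [key]
  apply round_int_add_of_abs_lt
  have hsum : |∑ i, d i * (v i : ℝ)| ≤ (n : ℝ) * p / 2 := by
    calc |∑ i, d i * (v i : ℝ)| ≤ ∑ i, |d i * (v i : ℝ)| := Finset.abs_sum_le_sum_abs _ _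
    _ ≤ ∑ _i : Fin n, (1/2) * (p : ℝ) := by
        apply Finset.sum_le_sum
        intro i _
        rw [abs_mul]
        have hvi : |(v i : ℝ)| ≤ (p : ℝ) := by
          have := hv i; rw [← Int.cast_abs]; exact_mod_cast this
        exact mul_le_mul (hdb i) hvi (abs_nonneg _) (by norm_num)
    _ = (n : ℝ) * p / 2 := by simp; ring
  have heR : |(e : ℝ)| ≤ (B₀ : ℝ) := by rw [← Int.cast_abs]; exact_mod_cast he
  have habs : |(∑ i, d i * (v i : ℝ)) + (e : ℝ)| ≤ (n : ℝ) * p / 2 + B₀ :=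
    (abs_add_le _ _).trans (add_le_add hsum heR)
  rw [hε, abs_mul, abs_div, abs_of_pos hpR, abs_of_pos hqR]
  rw [div_mul_eq_mul_div, div_lt_iff₀ hqR]
  have hqb : (n:ℝ) * p^2 + 2 * p * B₀ < q := by exact_mod_cast hq
  nlinarith [habs, hpR, abs_nonneg ((∑ i, d i * (v i : ℝ)) + (e : ℝ))]
end

section
/- The probability that a discrete Gaussian vector over ℤ^m equals the all-zero vector is exponentially small (the quantitative claim in the proof of Theorem 7.2, with explicit constant c = 2/3): For every real σ > 0 and every natural number m ≥ 1, (∑'_{x : Fin m → ℤ} exp(−π·(Σ_i (x i)²)/σ²))⁻¹ ≤ exp(−(2/3)·m·exp(−π/σ²)). -/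
open Real

set_option maxHeartbeats 1000000 in
/-- auxiliary: tsum over a pi type of a product of a nonneg summable function
factorizes as a power. -/
lemma aux_pi_tsum (g : ℤ → ℝ) (hg : Summable g) (hg0 : ∀ n, 0 ≤ g n) :
    ∀ m : ℕ, Summable (fun x : Fin m → ℤ => ∏ i, g (x i)) ∧
      (∑' x : Fin m → ℤ, ∏ i, g (x i)) = (∑' n, g n) ^ m := by
  intro m
  induction m with
  | zero =>
    haveI : Subsingleton (Fin 0 → ℤ) := ⟨fun a b => funext fun i => i.elim0⟩
    haveI : Finite (Fin 0 → ℤ) := Finite.of_subsingleton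
    refine ⟨Summable.of_finite, ?_⟩
    rw [tsum_eq_single (fun i => i.elim0) (fun b hb => absurd (Subsingleton.elim b _) hb)]
    simp
  | succ m ih =>
    have key : ∀ (a : ℤ) (x : Fin m → ℤ),
        (∏ i, g ((Fin.cons a x : Fin (m + 1) → ℤ) i)) = g a * ∏ i, g (x i) := by
      intro a x
      rw [Fin.prod_univ_succ]
      simp
    have hcomp : ∀ p : ℤ × (Fin m → ℤ),
        (∏ i, g (((Fin.consEquiv fun _ => ℤ) p) i)) = g p.1 * ∏ i, g (p.2 i) := by
      intro p
      simp only [Fin.consEquiv_apply]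
      exact key p.1 p.2
    have hsum : Summable (fun p : ℤ × (Fin m → ℤ) => g p.1 * ∏ i, g (p.2 i)) := by
      apply Summable.mul_of_nonneg hg ih.1
      · intro n; exact hg0 n
      · intro x; exact Finset.prod_nonneg fun i _ => hg0 _
    have hS : Summable (fun x : Fin (m + 1) → ℤ => ∏ i, g (x i)) := by
      rw [← (Fin.consEquiv fun _ => ℤ).summable_iff]
      exact hsum.congr fun p => (hcomp p).symm
    refine ⟨hS, ?_⟩
    calc (∑' x : Fin (m + 1) → ℤ, ∏ i, g (x i))
        = ∑' p : ℤ × (Fin m → ℤ), ∏ i, g (((Fin.consEquiv fun _ => ℤ) p) i) :=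
          ((Fin.consEquiv fun _ => ℤ).tsum_eq _).symm
      _ = ∑' p : ℤ × (Fin m → ℤ), g p.1 * ∏ i, g (p.2 i) := tsum_congr hcomp
      _ = ∑' a : ℤ, ∑' x : Fin m → ℤ, g a * ∏ i, g (x i) :=
          Summable.tsum_prod' hsum fun b => ih.1.mul_left (g b)
      _ = ∑' a : ℤ, g a * ∑' x : Fin m → ℤ, ∏ i, g (x i) :=
          tsum_congr fun a => tsum_mul_left
      _ = (∑' a : ℤ, g a) * (∑' n, g n) ^ m := by rw [tsum_mul_right, ih.2]
      _ = (∑' n, g n) ^ (m + 1) := by ring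

/-- The probability that a discrete Gaussian vector over ℤ^m is the zero
vector is exponentially small (with explicit constant c = 2/3). -/
theorem discrete_gaussian_zero_probability_bound
    (σ : ℝ) (hσ : 0 < σ) (m : ℕ) (hm : 1 ≤ m) :
    (∑' x : Fin m → ℤ, Real.exp (-(π * (∑ i, ((x i : ℝ)) ^ 2) / σ ^ 2)))⁻¹
      ≤ Real.exp (-((2 / 3) * (m : ℝ) * Real.exp (-(π / σ ^ 2)))) := by
  set g : ℤ → ℝ := fun n => Real.exp (-(π * (n : ℝ) ^ 2 / σ ^ 2)) with hgdef
  have hg0 : ∀ n, 0 ≤ g n := fun n => (Real.exp_pos _).le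
  have hσ2 : (0 : ℝ) < σ ^ 2 := by positivity
  have hπσ : (0 : ℝ) < π / σ ^ 2 := by positivity
  -- summability of g by comparison with a geometric series
  have hr : Real.exp (-(π / σ ^ 2)) < 1 := by
    rw [Real.exp_lt_one_iff]; linarith
  have hr0 : 0 ≤ Real.exp (-(π / σ ^ 2)) := (Real.exp_pos _).le
  have hgle : ∀ n : ℤ, g n ≤ Real.exp (-(π / σ ^ 2)) ^ n.natAbs := by
    intro n
    rw [← Real.exp_nat_mul, Real.exp_le_exp]
    have h1 : (n.natAbs : ℝ) ≤ (n : ℝ) ^ 2 := by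
      have h2 : ((n.natAbs : ℝ)) ^ 2 = (n : ℝ) ^ 2 := by
        rw [Nat.cast_natAbs]; push_cast; rw [sq_abs]
      nlinarith [(by exact_mod_cast Nat.le_self_pow two_ne_zero n.natAbs :
          (n.natAbs : ℝ) ≤ ((n.natAbs : ℝ)) ^ 2)]
    have h2 := mul_le_mul_of_nonneg_right h1 hπσ.le
    calc -(π * (n : ℝ) ^ 2 / σ ^ 2) = -((n : ℝ) ^ 2 * (π / σ ^ 2)) := by ring
      _ ≤ -((n.natAbs : ℝ) * (π / σ ^ 2)) := by linarith
      _ = (n.natAbs : ℝ) * -(π / σ ^ 2) := by ring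
  have hgeo : Summable (fun n : ℤ => Real.exp (-(π / σ ^ 2)) ^ n.natAbs) := by
    apply Summable.of_nat_of_neg <;>
      simpa using summable_geometric_of_lt_one hr0 hr
  have hg : Summable g := hgeo.of_nonneg_of_le hg0 hgle
  obtain ⟨hSsum, hSeq⟩ := aux_pi_tsum g hg hg0 m
  -- rewrite the sum as a power
  have hrw : (∑' x : Fin m → ℤ, Real.exp (-(π * (∑ i, ((x i : ℝ)) ^ 2) / σ ^ 2)))
      = (∑' n, g n) ^ m := by
    rw [← hSeq]
    apply tsum_congr
    intro x
    rw [Finset.mul_sum, Finset.sum_div, ← Finset.sum_neg_distrib, Real.exp_sum]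
  rw [hrw]
  set t : ℝ := Real.exp (-(π / σ ^ 2)) with htdef
  have ht0 : 0 < t := Real.exp_pos _
  have ht1 : t ≤ 1 := hr.le
  -- lower bound the one-dimensional sum by 1 + 2t
  have hT : 1 + 2 * t ≤ ∑' n, g n := by
    have hle := Summable.sum_le_tsum ({0, 1, -1} : Finset ℤ) (fun n _ => hg0 n) hg
    have hs : (∑ n ∈ ({0, 1, -1} : Finset ℤ), g n) = 1 + 2 * t := by
      rw [Finset.sum_insert (by decide), Finset.sum_insert (by decide),
        Finset.sum_singleton]
      simp only [hgdef, htdef]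
      norm_num
      ring
    linarith
  have hTpos : 0 < ∑' n, g n := lt_of_lt_of_le (by linarith) hT
  -- key: exp((2/3) t) ≤ 1 + 2t
  have hkey : Real.exp (2 / 3 * t) ≤ 1 + 2 * t := by
    have h1 : 1 - 2 / 3 * t ≤ Real.exp (-(2 / 3 * t)) := by
      have := Real.add_one_le_exp (-(2 / 3 * t))
      linarith
    have h2 : 0 < 1 - 2 / 3 * t := by linarith
    have h3 : Real.exp (2 / 3 * t) = (Real.exp (-(2 / 3 * t)))⁻¹ := by
      rw [Real.exp_neg, inv_inv]
    rw [h3]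
    have h4 : (Real.exp (-(2 / 3 * t)))⁻¹ ≤ (1 - 2 / 3 * t)⁻¹ :=
      inv_anti₀ h2 h1
    have h5 : (1 - 2 / 3 * t)⁻¹ ≤ 1 + 2 * t := by
      rw [inv_le_iff_one_le_mul₀ h2]
      nlinarith
    linarith
  -- conclude
  have hstep : (∑' n, g n)⁻¹ ≤ Real.exp (-(2 / 3 * t)) := by
    rw [Real.exp_neg]
    exact inv_anti₀ (Real.exp_pos _) (le_trans hkey hT)
  calc ((∑' n, g n) ^ m)⁻¹ = ((∑' n, g n)⁻¹) ^ m := by rw [inv_pow]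
    _ ≤ Real.exp (-(2 / 3 * t)) ^ m := pow_le_pow_left₀ (by positivity) hstep m
    _ = Real.exp ((m : ℝ) * -(2 / 3 * t)) := (Real.exp_nat_mul _ m).symm
    _ = Real.exp (-((2 / 3) * (m : ℝ) * t)) := by ring_nf
end
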